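/- If (M N) reduces in zero or more steps of μμ'-reduction to a term of the form μα.P, then either M reduces to some μα.M₁ with M₁[α =_r N] reducing to P, or N reduces to some μα.N₁ with N₁[α =_l M] reducing to P. -/

import Mathlib

inductive Trm : Type
  | var : ℕ → Trm
  | lam : ℕ → Trm → Trm
  | app : Trm → Trm → Trm
  | mu  : ℕ → Trm → Trm
  | mvar : ℕ → Trm → Trm
  deriving DecidableEq

inductive Dir : Type
  | l | r
  deriving DecidableEq

/-- Capture-avoiding (naive named) β-substitution M[x := N]. -/
def subst : Trm → ℕ → Trm → Trm
  | Trm.var y, x, N => if y = x then N else Trm.var y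
  | Trm.lam y M, x, N => if y = x then Trm.lam y M else Trm.lam y (subst M x N)
  | Trm.app P Q, x, N => Trm.app (subst P x N) (subst Q x N)
  | Trm.mu a M, x, N => Trm.mu a (subst M x N)
  | Trm.mvar a M, x, N => Trm.mvar a (subst M x N)

/-- μ/μ'-substitution: M[α =_r N] replaces (α U) by (α (U N)); M[α =_l N] replaces (α U) by (α (N U)). -/
def msubst : Trm → ℕ → Dir → Trm → Trm
  | Trm.var y, _, _, _ => Trm.var y
  | Trm.lam y M, a, s, N => Trm.lam y (msubst M a s N)
  | Trm.app P Q, a, s, N => Trm.app (msubst P a s N) (msubst Q a s N)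
  | Trm.mu b M, a, s, N => if b = a then Trm.mu b M else Trm.mu b (msubst M a s N)
  | Trm.mvar b U, a, s, N =>
      let U' := msubst U a s N
      if b = a then
        match s with
        | Dir.r => Trm.mvar b (Trm.app U' N)
        | Dir.l => Trm.mvar b (Trm.app N U')
      else Trm.mvar b U'

abbrev MSub := List (ℕ × Dir × Trm)

def lookupD : MSub → ℕ → Option (Dir × Trm)
  | [], _ => none
  | (b, s, N) :: σ, a => if b = a then some (s, N) else lookupD σ a

/-- Simultaneous μμ'-substitution. -/
def smsubst (σ : MSub) : Trm → Trm
  | Trm.var y => Trm.var y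
  | Trm.lam y M => Trm.lam y (smsubst σ M)
  | Trm.app P Q => Trm.app (smsubst σ P) (smsubst σ Q)
  | Trm.mu b M => Trm.mu b (smsubst (σ.filter (fun p => p.1 != b)) M)
  | Trm.mvar b U =>
      let U' := smsubst σ U
      match lookupD σ b with
      | some (Dir.r, N) => Trm.mvar b (Trm.app U' N)
      | some (Dir.l, N) => Trm.mvar b (Trm.app N U')
      | none => Trm.mvar b U'

def lookupT : List (ℕ × Trm) → ℕ → Option Trm
  | [], _ => none
  | (y, N) :: σ, x => if y = x then some N else lookupT σ x

/-- Simultaneous β-substitution. -/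
def ssubst (σ : List (ℕ × Trm)) : Trm → Trm
  | Trm.var y =>
      match lookupT σ y with
      | some N => N
      | none => Trm.var y
  | Trm.lam y M => Trm.lam y (ssubst (σ.filter (fun p => p.1 != y)) M)
  | Trm.app P Q => Trm.app (ssubst σ P) (ssubst σ Q)
  | Trm.mu a M => Trm.mu a (ssubst σ M)
  | Trm.mvar a M => Trm.mvar a (ssubst σ M)

/-- One step of μμ'-reduction (no β), closed under all contexts. -/
inductive RedM : Trm → Trm → Prop
  | mu : ∀ a M N, RedM (Trm.app (Trm.mu a M) N) (Trm.mu a (msubst M a Dir.r N))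
  | mu' : ∀ a M N, RedM (Trm.app M (Trm.mu a N)) (Trm.mu a (msubst N a Dir.l M))
  | appL : ∀ M M' N, RedM M M' → RedM (Trm.app M N) (Trm.app M' N)
  | appR : ∀ M N N', RedM N N' → RedM (Trm.app M N) (Trm.app M N')
  | lam : ∀ x M M', RedM M M' → RedM (Trm.lam x M) (Trm.lam x M')
  | muC : ∀ a M M', RedM M M' → RedM (Trm.mu a M) (Trm.mu a M')
  | mvarC : ∀ a M M', RedM M M' → RedM (Trm.mvar a M) (Trm.mvar a M')

/-- One step of βμμ'-reduction, closed under all contexts. -/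
inductive Red : Trm → Trm → Prop
  | beta : ∀ x M N, Red (Trm.app (Trm.lam x M) N) (subst M x N)
  | mu : ∀ a M N, Red (Trm.app (Trm.mu a M) N) (Trm.mu a (msubst M a Dir.r N))
  | mu' : ∀ a M N, Red (Trm.app M (Trm.mu a N)) (Trm.mu a (msubst N a Dir.l M))
  | appL : ∀ M M' N, Red M M' → Red (Trm.app M N) (Trm.app M' N)
  | appR : ∀ M N N', Red N N' → Red (Trm.app M N) (Trm.app M N')
  | lam : ∀ x M M', Red M M' → Red (Trm.lam x M) (Trm.lam x M')
  | muC : ∀ a M M', Red M M' → Red (Trm.mu a M) (Trm.mu a M')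
  | mvarC : ∀ a M M', Red M M' → Red (Trm.mvar a M) (Trm.mvar a M')

/-- Strong normalization: no infinite R-reduction sequence from M. -/
def SNr (R : Trm → Trm → Prop) (M : Trm) : Prop := Acc (fun a b => R b a) M

/-- Subterm relation N ≤ M. -/
inductive Subterm : Trm → Trm → Prop
  | refl : ∀ M, Subterm M M
  | lam : ∀ x N M, Subterm N M → Subterm N (Trm.lam x M)
  | appL : ∀ N M P, Subterm N M → Subterm N (Trm.app M P)
  | appR : ∀ N M P, Subterm N P → Subterm N (Trm.app M P)
  | mu : ∀ a N M, Subterm N M → Subterm N (Trm.mu a M)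
  | mvar : ∀ a N M, Subterm N M → Subterm N (Trm.mvar a M)

/-- N ⪯ M : N is a subterm of some reduct of M. -/
def Pre (R : Trm → Trm → Prop) (N M : Trm) : Prop :=
  ∃ M', Relation.ReflTransGen R M M' ∧ Subterm N M'

/-- N ≺ M : N ≤ M' for some M' with M ▷* M' and (M ▷⁺ M' or N < M'). -/
def PreS (R : Trm → Trm → Prop) (N M : Trm) : Prop :=
  ∃ M', Relation.ReflTransGen R M M' ∧ Subterm N M' ∧
    (Relation.TransGen R M M' ∨ N ≠ M')

/-- Number of symbols. -/
def cxty : Trm → ℕ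
  | Trm.var _ => 1
  | Trm.lam _ M => cxty M + 1
  | Trm.app M N => cxty M + cxty N + 1
  | Trm.mu _ M => cxty M + 1
  | Trm.mvar _ M => cxty M + 1

/-- Length of the longest R-reduction starting from M. -/
noncomputable def eta (R : Trm → Trm → Prop) (M : Trm) : ℕ :=
  sSup {n | ∃ f : ℕ → Trm, f 0 = M ∧ ∀ i < n, R (f i) (f (i + 1))}

/-- Left-nested application (h M₁ … Mₙ). -/
def appList (h : Trm) (l : List Trm) : Trm := l.foldl Trm.app h

/-- The substitution M[α =_i (M₁ … Mₙ)] : replaces each (α U) by (α (x M₁ … M_{i-1} U M_{i+1} … Mₙ)),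
    i being a 0-based index into the list. -/
def isubst (a x : ℕ) (l : List Trm) (i : ℕ) : Trm → Trm
  | Trm.var y => Trm.var y
  | Trm.lam y M => Trm.lam y (isubst a x l i M)
  | Trm.app P Q => Trm.app (isubst a x l i P) (isubst a x l i Q)
  | Trm.mu b M => if b = a then Trm.mu b M else Trm.mu b (isubst a x l i M)
  | Trm.mvar b U =>
      let U' := isubst a x l i U
      if b = a then Trm.mvar b (appList (Trm.var x) (l.set i U')) else Trm.mvar b U'

/-- Free μ-variables. -/
def fmv : Trm → Finset ℕ
  | Trm.var _ => ∅
  | Trm.lam _ M => fmv M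
  | Trm.app P Q => fmv P ∪ fmv Q
  | Trm.mu b M => fmv M \ {b}
  | Trm.mvar b M => insert b (fmv M)

/-- Simple types. -/
inductive Ty : Type
  | bot : Ty
  | atom : ℕ → Ty
  | arr : Ty → Ty → Ty
  deriving DecidableEq

/-- Typing judgment Γ; Δ ⊢ M : A where Γ types λ-variables and Δ records, for each
    μ-variable α, the type A such that α : ¬A. -/
inductive Typing : (ℕ → Option Ty) → (ℕ → Option Ty) → Trm → Ty → Prop
  | var : ∀ Γ Δ x A, Γ x = some A → Typing Γ Δ (Trm.var x) A
  | lam : ∀ Γ Δ x M A B, Typing (Function.update Γ x (some A)) Δ M B →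
      Typing Γ Δ (Trm.lam x M) (Ty.arr A B)
  | app : ∀ Γ Δ M N A B, Typing Γ Δ M (Ty.arr A B) → Typing Γ Δ N A →
      Typing Γ Δ (Trm.app M N) B
  | mu : ∀ Γ Δ a M A, Typing Γ (Function.update Δ a (some A)) M Ty.bot →
      Typing Γ Δ (Trm.mu a M) A
  | mvar : ∀ Γ Δ a M A, Δ a = some A → Typing Γ Δ M A →
      Typing Γ Δ (Trm.mvar a M) Ty.bot

lemma mu_rtg {b X a P} (h : Relation.ReflTransGen RedM (Trm.mu b X) (Trm.mu a P)) :
    b = a ∧ Relation.ReflTransGen RedM X P := by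
  generalize hT : Trm.mu b X = T at h
  induction h using Relation.ReflTransGen.head_induction_on generalizing b X with
  | refl => injection hT with h1 h2; exact ⟨h1, h2 ▸ Relation.ReflTransGen.refl⟩
  | head hstep _ ih =>
    subst hT
    cases hstep with
    | muC _ _ X' hX =>
      obtain ⟨h1, h2⟩ := ih rfl
      exact ⟨h1, Relation.ReflTransGen.head hX h2⟩

lemma rtg_lam {x X Y} (h : Relation.ReflTransGen RedM X Y) :
    Relation.ReflTransGen RedM (Trm.lam x X) (Trm.lam x Y) :=
  Relation.ReflTransGen.lift (fun Z => Trm.lam x Z) (fun _ _ => RedM.lam x _ _) _ _ h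

lemma rtg_mu {b X Y} (h : Relation.ReflTransGen RedM X Y) :
    Relation.ReflTransGen RedM (Trm.mu b X) (Trm.mu b Y) :=
  Relation.ReflTransGen.lift (fun Z => Trm.mu b Z) (fun _ _ => RedM.muC b _ _) _ _ h

lemma rtg_mvar {b X Y} (h : Relation.ReflTransGen RedM X Y) :
    Relation.ReflTransGen RedM (Trm.mvar b X) (Trm.mvar b Y) :=
  Relation.ReflTransGen.lift (fun Z => Trm.mvar b Z) (fun _ _ => RedM.mvarC b _ _) _ _ h

lemma rtg_app {X X' Y Y'} (h1 : Relation.ReflTransGen RedM X X')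
    (h2 : Relation.ReflTransGen RedM Y Y') :
    Relation.ReflTransGen RedM (Trm.app X Y) (Trm.app X' Y') := by
  refine Relation.ReflTransGen.trans
    (Relation.ReflTransGen.lift (fun Z => Trm.app Z Y) (fun _ _ h => RedM.appL _ _ _ h) _ _ h1)
    (Relation.ReflTransGen.lift (fun Z => Trm.app X' Z) (fun _ _ h => RedM.appR _ _ _ h) _ _ h2)

lemma msubst_red {M M'} (h : RedM M M') :
    ∀ U a s, Relation.ReflTransGen RedM (msubst U a s M) (msubst U a s M')
  | Trm.var y, a, s => by simp only [msubst]; exact Relation.ReflTransGen.refl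
  | Trm.lam y U, a, s => by simpa [msubst] using rtg_lam (msubst_red h U a s)
  | Trm.app P Q, a, s => by
      simpa [msubst] using rtg_app (msubst_red h P a s) (msubst_red h Q a s)
  | Trm.mu b U, a, s => by
      by_cases hb : b = a
      · simp only [msubst, hb, if_pos]; exact Relation.ReflTransGen.refl
      · simp only [msubst, hb, if_neg, ite_false]
        exact rtg_mu (msubst_red h U a s)
  | Trm.mvar b U, a, s => by
      by_cases hb : b = a
      · cases s
        · simpa [msubst, hb] using
            rtg_mvar (rtg_app (Relation.ReflTransGen.single h) (msubst_red h U a Dir.l))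
        · simpa [msubst, hb] using
            rtg_mvar (rtg_app (msubst_red h U a Dir.r) (Relation.ReflTransGen.single h))
      · simpa [msubst, hb] using rtg_mvar (msubst_red h U a s)

lemma app_rtg {T a P} (h : Relation.ReflTransGen RedM T (Trm.mu a P)) :
    ∀ M N, T = Trm.app M N →
    (∃ M₁, Relation.ReflTransGen RedM M (Trm.mu a M₁) ∧
        Relation.ReflTransGen RedM (msubst M₁ a Dir.r N) P) ∨
    (∃ N₁, Relation.ReflTransGen RedM N (Trm.mu a N₁) ∧
        Relation.ReflTransGen RedM (msubst N₁ a Dir.l M) P) := by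
  induction h using Relation.ReflTransGen.head_induction_on with
  | refl => intro M N hMN; cases hMN
  | head hstep hrest ih =>
    intro M N hMN
    subst hMN
    cases hstep with
    | mu b M₁ _ =>
      obtain ⟨h1, h2⟩ := mu_rtg hrest
      subst h1
      exact Or.inl ⟨M₁, Relation.ReflTransGen.refl, h2⟩
    | mu' b _ N₁ =>
      obtain ⟨h1, h2⟩ := mu_rtg hrest
      subst h1
      exact Or.inr ⟨N₁, Relation.ReflTransGen.refl, h2⟩
    | appL _ M' _ hM =>
      rcases ih M' N rfl with ⟨M₁, hm, hs⟩ | ⟨N₁, hn, hs⟩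
      · exact Or.inl ⟨M₁, Relation.ReflTransGen.head hM hm, hs⟩
      · exact Or.inr ⟨N₁, hn, (msubst_red hM N₁ a Dir.l).trans hs⟩
    | appR _ _ N' hN =>
      rcases ih M N' rfl with ⟨M₁, hm, hs⟩ | ⟨N₁, hn, hs⟩
      · exact Or.inl ⟨M₁, hm, (msubst_red hN M₁ a Dir.r).trans hs⟩
      · exact Or.inr ⟨N₁, Relation.ReflTransGen.head hN hn, hs⟩

theorem stmt0 (M N P : Trm) (a : ℕ)
    (h : Relation.ReflTransGen RedM (Trm.app M N) (Trm.mu a P)) :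
    (∃ M₁, Relation.ReflTransGen RedM M (Trm.mu a M₁) ∧
        Relation.ReflTransGen RedM (msubst M₁ a Dir.r N) P) ∨
    (∃ N₁, Relation.ReflTransGen RedM N (Trm.mu a N₁) ∧
        Relation.ReflTransGen RedM (msubst N₁ a Dir.l M) P) :=
  app_rtg h M N rfl
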